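/- Let p ≥ 5 be a prime. The submodule of functions with zero average in F_p[P¹(F_p)] is isomorphic as an SL₂(F_p)-representation to Symm^{p-1}(F_p²), the (p-1)-st symmetric power of the standard 2-dimensional representation. -/

import Mathlib

open Matrix Projectivization MvPolynomial

namespace ZSAux

lemma eval_smul_pow {σ R : Type*} [Fintype σ] [CommSemiring R] {F : MvPolynomial σ R} {n : ℕ}
    (hF : F.IsHomogeneous n) (c : R) (v : σ → R) :
    eval (c • v) F = c ^ n * eval v F := by
  rw [eval_eq', eval_eq', Finset.mul_sum]
  refine Finset.sum_congr rfl fun e he => ?_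
  have hdeg : ∑ i, e i = n := by
    have h1 := hF (mem_support_iff.mp he)
    simp only [Finsupp.weight_apply, Finsupp.sum, Pi.one_apply, smul_eq_mul, mul_one] at h1
    rw [← h1]
    refine (Finset.sum_subset (Finset.subset_univ _) ?_).symm
    intro i _ hi
    simp [Finsupp.notMem_support_iff.mp hi]
  have : ∏ i, (c • v) i ^ e i = c ^ n * ∏ i, v i ^ e i := by
    simp only [Pi.smul_apply, smul_eq_mul, mul_pow]
    rw [Finset.prod_mul_distrib, Finset.prod_pow_eq_pow_sum, hdeg]
  rw [this]; ring

variable {p : ℕ} [Fact p.Prime]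

lemma eval_rep {F : MvPolynomial (Fin 2) (ZMod p)} (hF : F.IsHomogeneous (p - 1))
    (v : Fin 2 → ZMod p) (hv : v ≠ 0) :
    eval (Projectivization.mk (ZMod p) v hv).rep F = eval v F := by
  obtain ⟨a, ha⟩ := Projectivization.exists_smul_eq_mk_rep (ZMod p) v hv
  rw [← ha, Units.smul_def, eval_smul_pow hF,
    ZMod.pow_card_sub_one_eq_one (Units.ne_zero a), one_mul]

lemma two_ne_zero' {v : Fin 2 → ZMod p} (h0 : v 0 = 0) (h1 : v 1 = 0) : v = 0 :=
  funext fun i => by fin_cases i <;> assumption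

lemma det_eq_zero_iff (v w : Fin 2 → ZMod p) (hv : v ≠ 0) (hw : w ≠ 0) :
    v 0 * w 1 - v 1 * w 0 = 0 ↔
      Projectivization.mk (ZMod p) v hv = Projectivization.mk (ZMod p) w hw := by
  rw [Projectivization.mk_eq_mk_iff']
  constructor
  · intro h
    rw [sub_eq_zero] at h
    by_cases h0 : w 0 = 0
    · have hw1 : w 1 ≠ 0 := fun h1 => hw (two_ne_zero' h0 h1)
      have hv0 : v 0 = 0 := by
        have := h
        rw [h0, mul_zero] at this
        rcases mul_eq_zero.mp this with h' | h'
        · exact h'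
        · exact absurd h' hw1
      refine ⟨v 1 / w 1, funext fun i => ?_⟩
      fin_cases i <;> simp [Pi.smul_apply, smul_eq_mul, h0, hv0, div_mul_cancel₀, hw1]
    · refine ⟨v 0 / w 0, funext fun i => ?_⟩
      fin_cases i
      · simp [Pi.smul_apply, smul_eq_mul, div_mul_cancel₀, h0]
      · show v 0 / w 0 * w 1 = v 1
        field_simp
        linear_combination h
  · rintro ⟨a, rfl⟩
    simp only [Pi.smul_apply, smul_eq_mul]
    ring


noncomputable def Gpoly (v : Fin 2 → ZMod p) : MvPolynomial (Fin 2) (ZMod p) :=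
  (C (v 0) * X 1 - C (v 1) * X 0) ^ (p - 1)

lemma Gpoly_hom (v : Fin 2 → ZMod p) : (Gpoly v).IsHomogeneous (p - 1) := by
  have h1 : (C (v 0) * X 1 - C (v 1) * X 0 : MvPolynomial (Fin 2) (ZMod p)).IsHomogeneous 1 :=
    (((isHomogeneous_X _ _).C_mul _)).sub (((isHomogeneous_X _ _).C_mul _))
  simpa [Gpoly] using h1.pow (p - 1)

lemma eval_Gpoly (v w : Fin 2 → ZMod p) :
    eval w (Gpoly v) = (v 0 * w 1 - v 1 * w 0) ^ (p - 1) := by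
  simp [Gpoly]

open scoped Classical in
lemma eval_Gpoly_rep (x y : Projectivization (ZMod p) (Fin 2 → ZMod p)) :
    eval y.rep (Gpoly x.rep) = if y = x then 0 else 1 := by
  rw [eval_Gpoly]
  have hp1 : p - 1 ≠ 0 := by
    have := (Fact.out : p.Prime).two_le; omega
  by_cases h : y = x
  · subst h
    rw [show y.rep 0 * y.rep 1 - y.rep 1 * y.rep 0 = 0 by ring, zero_pow hp1, if_pos rfl]
  · rw [if_neg h]
    apply ZMod.pow_card_sub_one_eq_one
    intro hdet
    apply h
    have := (det_eq_zero_iff x.rep y.rep x.rep_nonzero y.rep_nonzero).mp hdet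
    rw [Projectivization.mk_rep, Projectivization.mk_rep] at this
    exact this.symm


lemma sum_eval_all (h5 : 5 ≤ p) {F : MvPolynomial (Fin 2) (ZMod p)}
    (hF : F.IsHomogeneous (p - 1)) :
    ∑ v : Fin 2 → ZMod p, eval v F = 0 := by
  simp_rw [eval_eq']
  rw [Finset.sum_comm]
  refine Finset.sum_eq_zero fun e he => ?_
  rw [← Finset.mul_sum]
  have hsum : ∑ v : Fin 2 → ZMod p, ∏ i, v i ^ e i
      = ∏ i : Fin 2, ∑ t : ZMod p, t ^ e i := by
    rw [Finset.prod_univ_sum, Fintype.piFinset_univ]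
  rw [hsum]
  have hdeg : e 0 + e 1 = p - 1 := by
    have h1 := hF (mem_support_iff.mp he)
    simp only [Finsupp.weight_apply, Finsupp.sum, Pi.one_apply, smul_eq_mul, mul_one] at h1
    rw [← h1]
    rw [show (e 0 + e 1 : ℕ) = ∑ i : Fin 2, e i from (Fin.sum_univ_two _).symm]
    refine (Finset.sum_subset (Finset.subset_univ _) ?_).symm
    intro i _ hi
    simp [Finsupp.notMem_support_iff.mp hi]
  obtain ⟨i, hi⟩ : ∃ i : Fin 2, e i < p - 1 := by
    by_cases h : e 0 < p - 1
    · exact ⟨0, h⟩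
    · exact ⟨1, by omega⟩
  rw [Finset.prod_eq_zero (Finset.mem_univ i), mul_zero]
  have := FiniteField.sum_pow_lt_card_sub_one (K := ZMod p) (e i) (by rwa [ZMod.card])
  exact this

lemma sum_eval_rep (h5 : 5 ≤ p) {F : MvPolynomial (Fin 2) (ZMod p)}
    (hF : F.IsHomogeneous (p - 1))
    [Fintype (Projectivization (ZMod p) (Fin 2 → ZMod p))] :
    ∑ x : Projectivization (ZMod p) (Fin 2 → ZMod p), eval x.rep F = 0 := by
  classical
  let P1 := Projectivization (ZMod p) (Fin 2 → ZMod p)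
  let S : ZMod p := ∑ x : P1, eval x.rep F
  show S = 0
  have hfbij : Function.Bijective (fun cp : (ZMod p)ˣ × P1 =>
      (⟨(cp.1 : ZMod p) • cp.2.rep, smul_ne_zero (Units.ne_zero cp.1) cp.2.rep_nonzero⟩ :
        {v : Fin 2 → ZMod p // v ≠ 0})) := by
    constructor
    · rintro ⟨c, x⟩ ⟨c', x'⟩ hcx
      have hval : (c : ZMod p) • x.rep = (c' : ZMod p) • x'.rep := congrArg Subtype.val hcx
      have hx : x = x' := by
        have h1 : Projectivization.mk (ZMod p) ((c : ZMod p) • x.rep)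
            (smul_ne_zero (Units.ne_zero c) x.rep_nonzero) = x := by
          rw [show Projectivization.mk (ZMod p) ((c : ZMod p) • x.rep)
              (smul_ne_zero (Units.ne_zero c) x.rep_nonzero)
            = Projectivization.mk (ZMod p) x.rep x.rep_nonzero from
            (Projectivization.mk_eq_mk_iff _ _ _ _ _).mpr ⟨c, rfl⟩, Projectivization.mk_rep]
        have h2 : Projectivization.mk (ZMod p) ((c' : ZMod p) • x'.rep)
            (smul_ne_zero (Units.ne_zero c') x'.rep_nonzero) = x' := by
          rw [show Projectivization.mk (ZMod p) ((c' : ZMod p) • x'.rep)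
              (smul_ne_zero (Units.ne_zero c') x'.rep_nonzero)
            = Projectivization.mk (ZMod p) x'.rep x'.rep_nonzero from
            (Projectivization.mk_eq_mk_iff _ _ _ _ _).mpr ⟨c', rfl⟩, Projectivization.mk_rep]
        rw [← h1, ← h2]
        congr 1
      subst hx
      have hc : c = c' := by
        have : ((c : ZMod p) - (c' : ZMod p)) • x.rep = 0 := by
          rw [sub_smul, hval, sub_self]
        rcases smul_eq_zero.mp this with h | h
        · exact Units.ext (by rwa [sub_eq_zero] at h)
        · exact absurd h x.rep_nonzero
      rw [hc]
    · rintro ⟨v, hv⟩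
      obtain ⟨a, ha⟩ := Projectivization.exists_smul_eq_mk_rep (ZMod p) v hv
      refine ⟨⟨a⁻¹, Projectivization.mk (ZMod p) v hv⟩, Subtype.ext ?_⟩
      show (↑a⁻¹ : ZMod p) • (Projectivization.mk (ZMod p) v hv).rep = v
      rw [← ha]
      rw [← Units.smul_def]
      exact inv_smul_smul a v
  have key : ∑ cp : (ZMod p)ˣ × P1, eval ((cp.1 : ZMod p) • cp.2.rep) F
      = ∑ v : {v : Fin 2 → ZMod p // v ≠ 0}, eval (v : Fin 2 → ZMod p) F :=
    Fintype.sum_bijective _ hfbij _ _ (fun cp => rfl)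
  have lhs_eq : ∑ cp : (ZMod p)ˣ × P1, eval ((cp.1 : ZMod p) • cp.2.rep) F
      = (p - 1 : ℕ) • S := by
    rw [Fintype.sum_prod_type]
    have : ∀ c : (ZMod p)ˣ, ∑ x : P1, eval ((c : ZMod p) • x.rep) F = S := by
      intro c
      refine Finset.sum_congr rfl fun x _ => ?_
      rw [eval_smul_pow hF, ZMod.pow_card_sub_one_eq_one (Units.ne_zero c), one_mul]
    rw [Finset.sum_congr rfl fun c _ => this c, Finset.sum_const, Finset.card_univ,
      ZMod.card_units_eq_totient, Nat.totient_prime Fact.out]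
  have rhs_eq : ∑ v : {v : Fin 2 → ZMod p // v ≠ 0}, eval (v : Fin 2 → ZMod p) F = 0 := by
    have h1 : ∑ v : {v : Fin 2 → ZMod p // v ≠ 0}, eval (v : Fin 2 → ZMod p) F
        = ∑ v ∈ Finset.univ.erase (0 : Fin 2 → ZMod p), eval v F := by
      rw [← Finset.sum_subtype (Finset.univ.erase (0 : Fin 2 → ZMod p))
        (fun v => by simp) (fun v => eval v F)]
    have h2 : eval (0 : Fin 2 → ZMod p) F = 0 := by
      rw [show (eval (0 : Fin 2 → ZMod p)) F = constantCoeff F from congrFun (congrArg _ eval_zero) F]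
      exact hF.coeff_eq_zero (by simp [map_zero]; omega)
    rw [h1, Finset.sum_erase_eq_sub (Finset.mem_univ _), h2, sub_zero,
      sum_eval_all h5 hF]
  have hfinal : (p - 1 : ℕ) • S = 0 := by rw [lhs_eq.symm.trans (key.trans rhs_eq)]
  have hcast : ((p - 1 : ℕ) : ZMod p) * S = 0 := by
    rwa [nsmul_eq_mul] at hfinal
  have hne : ((p - 1 : ℕ) : ZMod p) ≠ 0 := by
    rw [Nat.cast_sub (by omega), Nat.cast_one, ZMod.natCast_self, zero_sub, neg_ne_zero]
    exact one_ne_zero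
  exact (mul_eq_zero.mp hcast).resolve_left hne


lemma eval_at_zero {F : MvPolynomial (Fin 2) (ZMod p)} (hF : F.IsHomogeneous (p - 1)) :
    eval (0 : Fin 2 → ZMod p) F = 0 := by
  rw [show (eval (0 : Fin 2 → ZMod p)) F = constantCoeff F from congrFun (congrArg _ eval_zero) F]
  have := (Fact.out : p.Prime).two_le
  exact hF.coeff_eq_zero (by simp [map_zero]; omega)

lemma eval_aeval' (x : Fin 2 → ZMod p) (f : Fin 2 → MvPolynomial (Fin 2) (ZMod p))
    (P : MvPolynomial (Fin 2) (ZMod p)) :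
    eval x (aeval f P) = eval (fun i => eval x (f i)) P := by
  rw [aeval_def, eval_eval₂]
  have h : (eval x).comp (algebraMap (ZMod p) (MvPolynomial (Fin 2) (ZMod p)))
      = RingHom.id (ZMod p) := by
    ext c; simp
  rw [h]
  rfl

end ZSAux


open Matrix Projectivization MvPolynomial

theorem mapCongr {K V : Type} [Field K] [AddCommGroup V] [Module K V]
    {f g : V →ₗ[K] V} (hf : Function.Injective f) (hg : Function.Injective g)
    (h : f = g) (x : Projectivization K V) :
    Projectivization.map f hf x = Projectivization.map g hg x := by subst h; rfl

/-- The Möbius action of `SL₂(K)` on the projective line `P¹(K)`. -/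
noncomputable instance sl2P1Action (K : Type) [Field K] :
    MulAction (Matrix.SpecialLinearGroup (Fin 2) K) (Projectivization K (Fin 2 → K)) where
  smul g x := Projectivization.map (Matrix.SpecialLinearGroup.toLin' g).toLinearMap
    (Matrix.SpecialLinearGroup.toLin' g).injective x
  one_smul x := by
    show Projectivization.map _ _ x = x
    rw [mapCongr _ (LinearEquiv.refl K (Fin 2 → K)).injective (by ext v; simp) x]
    exact congrFun Projectivization.map_id x
  mul_smul a b x := by
    show Projectivization.map _ _ x = Projectivization.map _ _ (Projectivization.map _ _ x)
    rw [← Function.comp_apply (f := Projectivization.map _ _), ← Projectivization.map_comp]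
    exact mapCongr _ _ (by ext v; simp [_root_.map_mul]) x

instance P1Finite (K V : Type) [Field K] [AddCommGroup V] [Module K V] [Finite V] :
    Finite (Projectivization K V) := by
  unfold Projectivization; infer_instance

/-- Evaluation of a polynomial at the chosen representative of a point of `P¹`. -/
noncomputable def evalMap (p : ℕ) [Fact p.Prime] :
    MvPolynomial (Fin 2) (ZMod p) →ₗ[ZMod p]
      (Projectivization (ZMod p) (Fin 2 → ZMod p) → ZMod p) where
  toFun P := fun x => eval x.rep P
  map_add' := by intros; funext; simp
  map_smul' := by intros; funext; simp [MvPolynomial.smul_eval]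

/-- For a prime `p ≥ 5`, the submodule of zero-sum functions in `F_p[P¹(F_p)]`
is isomorphic, as an `SL₂(F_p)`-representation, to `Symm^{p-1}(F_p²)`, the
homogeneous polynomials of degree `p-1`: evaluation at representatives gives an
injective equivariant linear map from `Symm^{p-1}(F_p²)` with image exactly the
zero-sum functions. -/
theorem zero_sum_iso_symm (p : ℕ) [Fact p.Prime] (h5 : 5 ≤ p) :
    letI P1 := Projectivization (ZMod p) (Fin 2 → ZMod p)
    letI : Fintype P1 := Fintype.ofFinite P1
    letI Sym := homogeneousSubmodule (Fin 2) (ZMod p) (p - 1)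
    letI φ : Sym →ₗ[ZMod p] (P1 → ZMod p) := (evalMap p).comp Sym.subtype
    Function.Injective φ ∧
      LinearMap.range φ =
        LinearMap.ker
          ({ toFun := fun f : P1 → ZMod p => ∑ x, f x
             map_add' := by intro f g; simp [Finset.sum_add_distrib]
             map_smul' := by intro c f; simp [Finset.mul_sum] } :
            (P1 → ZMod p) →ₗ[ZMod p] ZMod p) ∧
      ∀ (g : Matrix.SpecialLinearGroup (Fin 2) (ZMod p)) (P Q : Sym),
        (Q : MvPolynomial (Fin 2) (ZMod p)) =
          aeval (fun i => ∑ j,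
            C ((g⁻¹ : Matrix.SpecialLinearGroup (Fin 2) (ZMod p)) i j) * X j) (P : MvPolynomial (Fin 2) (ZMod p)) →
        φ Q = fun x => φ P (g⁻¹ • x) := by
  refine ⟨?_, ?_, ?_⟩
  · intro P Q h
    apply Subtype.ext
    have hcard : ((p - 1 : ℕ) : Cardinal) ≤ Cardinal.mk (ZMod p) := by
      rw [Cardinal.mk_fintype, ZMod.card]
      exact_mod_cast Nat.sub_le p 1
    refine MvPolynomial.IsHomogeneous.funext_of_le_card P.2 Q.2 ?_ hcard
    intro r
    by_cases hr : r = 0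
    · subst hr
      rw [ZSAux.eval_at_zero P.2, ZSAux.eval_at_zero Q.2]
    · have hr' := congrFun h (Projectivization.mk (ZMod p) r hr)
      rw [← ZSAux.eval_rep P.2 r hr, ← ZSAux.eval_rep Q.2 r hr]
      exact hr'
  · letI F1 : Fintype (Projectivization (ZMod p) (Fin 2 → ZMod p)) :=
      Fintype.ofFinite (Projectivization (ZMod p) (Fin 2 → ZMod p))
    ext f
    simp only [LinearMap.mem_range, LinearMap.mem_ker, LinearMap.coe_mk, AddHom.coe_mk]
    constructor
    · rintro ⟨P, rfl⟩
      exact ZSAux.sum_eval_rep h5 P.2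
    · intro hf
      classical
      have hv0 : (![1, 0] : Fin 2 → ZMod p) ≠ 0 := by
        intro h
        have := congrFun h 0
        simp at this
      set x₀ := Projectivization.mk (ZMod p) ![1, 0] hv0 with hx₀
      set G : Projectivization (ZMod p) (Fin 2 → ZMod p) →
          homogeneousSubmodule (Fin 2) (ZMod p) (p - 1) :=
        fun x => ⟨ZSAux.Gpoly x.rep, ZSAux.Gpoly_hom x.rep⟩ with hG
      refine ⟨∑ x, f x • (G x₀ - G x), ?_⟩
      funext y
      rw [map_sum, Finset.sum_apply]
      have hterm : ∀ x : Projectivization (ZMod p) (Fin 2 → ZMod p),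
          (((evalMap p).comp (homogeneousSubmodule (Fin 2) (ZMod p) (p - 1)).subtype)
            (f x • (G x₀ - G x))) y
          = f x * ((if y = x₀ then 0 else 1) - (if y = x then 0 else 1)) := by
        intro x
        rw [_root_.map_smul, map_sub]
        simp only [Pi.smul_apply, Pi.sub_apply, smul_eq_mul]
        congr 1
        rw [show (((evalMap p).comp (homogeneousSubmodule (Fin 2) (ZMod p) (p - 1)).subtype)
            (G x₀)) y = eval y.rep (ZSAux.Gpoly x₀.rep) from rfl]
        rw [show (((evalMap p).comp (homogeneousSubmodule (Fin 2) (ZMod p) (p - 1)).subtype)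
            (G x)) y = eval y.rep (ZSAux.Gpoly x.rep) from rfl]
        rw [ZSAux.eval_Gpoly_rep x₀ y, ZSAux.eval_Gpoly_rep x y]
      rw [Finset.sum_congr rfl (fun x _ => hterm x)]
      simp_rw [mul_sub]
      rw [Finset.sum_sub_distrib, ← Finset.sum_mul, hf, zero_mul]
      have hterm2 : ∀ x : Projectivization (ZMod p) (Fin 2 → ZMod p),
          f x * (if y = x then (0 : ZMod p) else 1) = f x - (if y = x then f x else 0) := by
        intro x
        by_cases h : y = x <;> simp [h]
      rw [Finset.sum_congr rfl (fun x _ => hterm2 x), Finset.sum_sub_distrib, hf,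
        Finset.sum_ite_eq, if_pos (Finset.mem_univ y)]
      ring
  · intro g P Q hQ
    funext x
    show eval x.rep (Q : MvPolynomial (Fin 2) (ZMod p))
      = eval (Projectivization.map (Matrix.SpecialLinearGroup.toLin' g⁻¹).toLinearMap
          (Matrix.SpecialLinearGroup.toLin' g⁻¹).injective x).rep
          (P : MvPolynomial (Fin 2) (ZMod p))
    have hrhs : eval (Projectivization.map (Matrix.SpecialLinearGroup.toLin' g⁻¹).toLinearMap
        (Matrix.SpecialLinearGroup.toLin' g⁻¹).injective x).rep
          (P : MvPolynomial (Fin 2) (ZMod p))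
        = eval ((Matrix.SpecialLinearGroup.toLin' g⁻¹).toLinearMap x.rep)
            (P : MvPolynomial (Fin 2) (ZMod p)) := by
      conv_lhs => rw [← x.mk_rep]
      rw [Projectivization.map_mk]
      exact ZSAux.eval_rep P.2 _ _
    rw [hQ, ZSAux.eval_aeval', hrhs]
    have hfun : (fun i => eval x.rep (∑ j, C ((g⁻¹ : Matrix.SpecialLinearGroup (Fin 2) (ZMod p)) i j) * X j))
        = ((Matrix.SpecialLinearGroup.toLin' (g⁻¹ : Matrix.SpecialLinearGroup (Fin 2) (ZMod p))) x.rep : Fin 2 → ZMod p) := by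
      funext i
      simp only [map_sum, eval_mul, eval_C, eval_X,
        Matrix.SpecialLinearGroup.toLin'_apply, Matrix.toLin'_apply, Matrix.mulVec,
        dotProduct]
    exact congrArg (fun v : Fin 2 → ZMod p => eval v (P : MvPolynomial (Fin 2) (ZMod p))) hfun
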